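/- arXiv:2007.05164 — 2 statements merged into one kernel-verified Lean document; each statement's English description precedes it below -/
import Mathlib

section
/- Assume there exists A ⊆ Fin m with v(A) ≥ w(A) + 1. Then the instance IT(v,w) is 2m·w([m])-balanced: for every ℓ ∈ {1,…,k−1}, v'_k(G) ≤ 2m·w([m]) · max_T (v'_ℓ(T) − v'_{ℓ+1}(T)), where G is the entire ground set and the max is over all subsets T of the ground set. (In particular, v'_k(G) ≤ 2km·w([m]) and max_T (v'_ℓ(T) − v'_{ℓ+1}(T)) ≥ k+ℓ.) -/
open Finset

/-- The `i`-th coordinate of a subset of the ground set consisting of `k−1`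
disjoint copies of `Fin m`: the part of `S` inside copy `M_i`, viewed as a
subset of `Fin m`. (Copies are indexed `0,…,k−2`, copy `i` being `M_{i+1}`.) -/
def copyPart (m k : ℕ) (S : Finset (Fin (k - 1) × Fin m)) (i : Fin (k - 1)) :
    Finset (Fin m) :=
  (S.filter (fun p => p.1 = i)).image Prod.snd

/-- The scaled disjoint union `v_ℓ(S) = Σ_{i≥ℓ} (k+i)·v(S_i) + Σ_{i<ℓ} (k+i)·w(S_i)`
(indices `i ∈ {1,…,k−1}`, here represented by `Fin (k-1)` shifted by one). -/
def scaledDU (m k : ℕ) (v w : Finset (Fin m) → ℕ) (ℓ : ℕ)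
    (S : Finset (Fin (k - 1) × Fin m)) : ℕ :=
  ∑ i : Fin (k - 1), (k + (i : ℕ) + 1) *
    (if ℓ ≤ (i : ℕ) + 1 then v (copyPart m k S i) else w (copyPart m k S i))

/-- Item truncation at `y` of a set function: `u'(S) = max_{T ⊆ S, |T| ≤ y} u(T)`. -/
def itemTrunc {α : Type*} (y : ℕ) (u : Finset α → ℕ) (S : Finset α) : ℕ :=
  (S.powerset.filter (fun T => T.card ≤ y)).sup u

/-- `v'_ℓ`, the `ℓ`-th function of the instance `IT(v,w)`: the item truncation
at `m` of the scaled disjoint union `v_ℓ`. -/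
def ITfun (m k : ℕ) (v w : Finset (Fin m) → ℕ) (ℓ : ℕ)
    (S : Finset (Fin (k - 1) × Fin m)) : ℕ :=
  itemTrunc m (scaledDU m k v w ℓ) S

lemma copyPart_mono (m k : ℕ) {S T : Finset (Fin (k - 1) × Fin m)} (h : S ⊆ T)
    (i : Fin (k - 1)) : copyPart m k S i ⊆ copyPart m k T i :=
  Finset.image_subset_image (Finset.filter_subset_filter _ h)

lemma itemTrunc_le {α : Type*} {y : ℕ} {u : Finset α → ℕ} {S : Finset α} {c : ℕ}
    (h : ∀ T ⊆ S, T.card ≤ y → u T ≤ c) : itemTrunc y u S ≤ c := by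
  apply Finset.sup_le
  intro T hT
  rw [Finset.mem_filter, Finset.mem_powerset] at hT
  exact h T hT.1 hT.2

lemma le_itemTrunc {α : Type*} {y : ℕ} {u : Finset α → ℕ} {S T : Finset α}
    (hT : T ⊆ S) (hc : T.card ≤ y) : u T ≤ itemTrunc y u S :=
  Finset.le_sup (by rw [Finset.mem_filter, Finset.mem_powerset]; exact ⟨hT, hc⟩)

lemma copyPart_eq_empty (m k : ℕ) (T : Finset (Fin (k - 1) × Fin m)) (i : Fin (k - 1))
    (h : i ∉ T.image Prod.fst) : copyPart m k T i = ∅ := by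
  unfold copyPart
  rw [Finset.image_eq_empty, Finset.filter_eq_empty_iff]
  intro p hp hpi
  exact h (Finset.mem_image.mpr ⟨p, hp, hpi⟩)

lemma copyPart_single (m k : ℕ) (A : Finset (Fin m)) (j i : Fin (k - 1)) :
    copyPart m k (A.image fun a => (j, a)) i = if i = j then A else ∅ := by
  ext x
  simp only [copyPart, Finset.mem_image, Finset.mem_filter]
  constructor
  · rintro ⟨p, ⟨⟨a, ha, rfl⟩, h1⟩, rfl⟩
    simp only at h1 ⊢
    rw [if_pos h1.symm]
    exact ha
  · intro hx
    by_cases hij : i = j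
    · rw [if_pos hij] at hx
      subst hij
      exact ⟨(i, x), ⟨⟨x, hx, rfl⟩, rfl⟩, rfl⟩
    · rw [if_neg hij] at hx
      exact absurd hx (Finset.notMem_empty x)

/-- If some `A` has `v(A) ≥ w(A) + 1`, then `IT(v,w)` is `2m·w([m])`-balanced:
for every `ℓ ∈ {1,…,k−1}`,
`v'_k(G) ≤ 2m·w([m]) · max_T (v'_ℓ(T) − v'_{ℓ+1}(T))`, where `G` is the whole
ground set. In particular `v'_k(G) ≤ 2km·w([m])` and the max is `≥ k+ℓ`. -/
theorem IT_balanced (m k : ℕ) (hk : 2 ≤ k)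
    (v w : Finset (Fin m) → ℕ)
    (hv0 : v ∅ = 0) (hw0 : w ∅ = 0)
    (hvmono : ∀ A B : Finset (Fin m), A ⊆ B → v A ≤ v B)
    (hwmono : ∀ A B : Finset (Fin m), A ⊆ B → w A ≤ w B)
    (hgap : ∃ A : Finset (Fin m), w A + 1 ≤ v A) :
    (∀ ℓ : ℕ, 1 ≤ ℓ → ℓ ≤ k - 1 →
      (ITfun m k v w k (Finset.univ : Finset (Fin (k - 1) × Fin m)) : ℤ)
        ≤ (2 * m * w (Finset.univ : Finset (Fin m)) : ℤ) *
          ((Finset.univ : Finset (Fin (k - 1) × Fin m)).powerset.sup'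
            ⟨∅, Finset.empty_mem_powerset _⟩
            (fun T => (ITfun m k v w ℓ T : ℤ) - ITfun m k v w (ℓ + 1) T))) ∧
    (ITfun m k v w k (Finset.univ : Finset (Fin (k - 1) × Fin m))
        ≤ 2 * k * m * w (Finset.univ : Finset (Fin m))) ∧
    (∀ ℓ : ℕ, 1 ≤ ℓ → ℓ ≤ k - 1 →
      (k + ℓ : ℤ) ≤
        (Finset.univ : Finset (Fin (k - 1) × Fin m)).powerset.sup'
          ⟨∅, Finset.empty_mem_powerset _⟩
          (fun T => (ITfun m k v w ℓ T : ℤ) - ITfun m k v w (ℓ + 1) T)) := by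
  -- Claim 2: truncation bound
  have claim2 : ITfun m k v w k (Finset.univ : Finset (Fin (k - 1) × Fin m))
      ≤ 2 * k * m * w (Finset.univ : Finset (Fin m)) := by
    apply itemTrunc_le
    intro T _ hTcard
    unfold scaledDU
    calc ∑ i : Fin (k - 1), (k + (i : ℕ) + 1) *
          (if k ≤ (i : ℕ) + 1 then v (copyPart m k T i) else w (copyPart m k T i))
        ≤ ∑ i : Fin (k - 1),
            2 * k * (if i ∈ T.image Prod.fst then w Finset.univ else 0) := by
          apply Finset.sum_le_sum
          intro i _
          have hik := i.isLt
          by_cases hi : i ∈ T.image Prod.fst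
          · rw [if_pos hi, if_neg (by omega)]
            exact Nat.mul_le_mul (by omega) (hwmono _ _ (Finset.subset_univ _))
          · rw [if_neg hi, copyPart_eq_empty m k T i hi, if_neg (by omega), hw0]
            simp
      _ = 2 * k * ((T.image Prod.fst).card * w Finset.univ) := by
          rw [← Finset.mul_sum, Finset.sum_ite_mem, Finset.univ_inter,
            Finset.sum_const, smul_eq_mul]
      _ ≤ 2 * k * (m * w Finset.univ) := by
          apply Nat.mul_le_mul_left
          apply Nat.mul_le_mul_right
          exact le_trans Finset.card_image_le hTcard
      _ = 2 * k * m * w Finset.univ := by ring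
  -- Claim 3: the gap is at least k + ℓ
  have claim3 : ∀ ℓ : ℕ, 1 ≤ ℓ → ℓ ≤ k - 1 →
      (k + ℓ : ℤ) ≤
        (Finset.univ : Finset (Fin (k - 1) × Fin m)).powerset.sup'
          ⟨∅, Finset.empty_mem_powerset _⟩
          (fun T => (ITfun m k v w ℓ T : ℤ) - ITfun m k v w (ℓ + 1) T) := by
    intro ℓ hℓ1 hℓ2
    obtain ⟨A, hA⟩ := hgap
    have hj : ℓ - 1 < k - 1 := by omega
    set j : Fin (k - 1) := ⟨ℓ - 1, hj⟩ with hjdef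
    have hjval : (j : ℕ) = ℓ - 1 := rfl
    set T : Finset (Fin (k - 1) × Fin m) := A.image (fun a => (j, a)) with hTdef
    have hTcard : T.card ≤ m :=
      le_trans Finset.card_image_le (le_trans (Finset.card_le_univ A) (by simp))
    have h1 : (k + ℓ) * v A ≤ ITfun m k v w ℓ T := by
      refine le_trans ?_ (le_itemTrunc (le_refl T) hTcard)
      unfold scaledDU
      rw [Finset.sum_eq_single_of_mem j (Finset.mem_univ j)]
      · rw [hTdef, copyPart_single, if_pos rfl, if_pos (by rw [hjval]; omega)]
        have hcoef : k + (j : ℕ) + 1 = k + ℓ := by rw [hjval]; omega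
        rw [hcoef]
      · intro i _ hi
        rw [hTdef, copyPart_single, if_neg hi]
        split <;> simp [hv0, hw0]
    have h2 : ITfun m k v w (ℓ + 1) T ≤ (k + ℓ) * w A := by
      apply itemTrunc_le
      intro U hU _
      unfold scaledDU
      calc ∑ i : Fin (k - 1), (k + (i : ℕ) + 1) *
            (if ℓ + 1 ≤ (i : ℕ) + 1 then v (copyPart m k U i) else w (copyPart m k U i))
          ≤ ∑ i : Fin (k - 1), (if i = j then (k + ℓ) * w A else 0) := by
            apply Finset.sum_le_sum
            intro i _
            have hsub : copyPart m k U i ⊆ (if i = j then A else ∅) := by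
              rw [← copyPart_single m k A j i]
              rw [hTdef] at hU
              exact copyPart_mono m k hU i
            by_cases hij : i = j
            · rw [if_pos hij] at hsub
              rw [if_pos hij, if_neg (by rw [hij, hjval]; omega)]
              have hcoef : k + (i : ℕ) + 1 = k + ℓ := by rw [hij, hjval]; omega
              rw [hcoef]
              exact Nat.mul_le_mul_left _ (hwmono _ _ hsub)
            · rw [if_neg hij] at hsub ⊢
              rw [Finset.subset_empty.mp hsub]
              split <;> simp [hv0, hw0]
        _ = (k + ℓ) * w A := by simp
    have h3 : (k + ℓ) * w A + (k + ℓ) ≤ (k + ℓ) * v A := by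
      calc (k + ℓ) * w A + (k + ℓ) = (k + ℓ) * (w A + 1) := by ring
        _ ≤ (k + ℓ) * v A := Nat.mul_le_mul_left _ hA
    have hTm : T ∈ (Finset.univ : Finset (Fin (k - 1) × Fin m)).powerset :=
      Finset.mem_powerset.mpr (Finset.subset_univ T)
    refine le_trans ?_ (Finset.le_sup'
      (fun T => (ITfun m k v w ℓ T : ℤ) - ITfun m k v w (ℓ + 1) T) hTm)
    zify at h1 h2 h3
    linarith
  refine ⟨?_, claim2, claim3⟩
  intro ℓ hℓ1 hℓ2
  have h3 := claim3 ℓ hℓ1 hℓ2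
  have hnn : (0 : ℤ) ≤ 2 * (m : ℤ) * (w Finset.univ : ℤ) := by positivity
  calc (ITfun m k v w k (Finset.univ : Finset (Fin (k - 1) × Fin m)) : ℤ)
      ≤ ((2 * k * m * w Finset.univ : ℕ) : ℤ) := by exact_mod_cast claim2
    _ ≤ (2 * (m : ℤ) * (w Finset.univ : ℤ)) * ((k : ℤ) + ℓ) := by
        push_cast
        nlinarith [hnn, Int.ofNat_nonneg ℓ, Int.ofNat_nonneg m,
          Int.ofNat_nonneg (w (Finset.univ : Finset (Fin m)))]
    _ ≤ (2 * (m : ℤ) * (w Finset.univ : ℤ)) *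
          ((Finset.univ : Finset (Fin (k - 1) × Fin m)).powerset.sup'
            ⟨∅, Finset.empty_mem_powerset _⟩
            (fun T => (ITfun m k v w ℓ T : ℤ) - ITfun m k v w (ℓ + 1) T)) :=
        mul_le_mul_of_nonneg_left h3 hnn
end

section
/- Assume there exists A ⊆ Fin m with v(A) ≥ w(A) + 1, and let α be a real number with 0 < α ≤ 1. Suppose S is a subset of the ground set and ℓ ∈ {1,…,k−1} are such that v''_ℓ(S) − v''_{ℓ+1}(S) ≥ α · max_T (v''_ℓ(T) − v''_{ℓ+1}(T)), where the max is over all subsets T of the ground set. Then v(S_ℓ) − w(S_ℓ) ≥ α · max_{B ⊆ Fin m} (v(B) − w(B)). (That is, any α-approximation to the SADP instance VT(v,w) yields an α-approximation to the ODP instance (v,w).) -/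
open Finset
set_option maxHeartbeats 2000000



def VTfun (m k : ℕ) (v w : Finset (Fin m) → ℕ) (ℓ : ℕ)
    (S : Finset (Fin (k - 1) × Fin m)) : ℕ :=
  min (scaledDU m k v w ℓ S) (2 * k * v (Finset.univ : Finset (Fin m)))

lemma copyPart_singleton_prod (m k : ℕ) (i₀ i : Fin (k-1)) (B : Finset (Fin m)) :
    copyPart m k ({i₀} ×ˢ B) i = if i = i₀ then B else ∅ := by
  ext x
  simp only [copyPart, Finset.mem_image, Finset.mem_filter, Finset.mem_product,
    Finset.mem_singleton]
  split
  · next h => subst h; constructor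
              · rintro ⟨p, ⟨⟨h1, h2⟩, _⟩, rfl⟩; exact h2
              · intro hx; exact ⟨(i, x), ⟨⟨rfl, hx⟩, rfl⟩, rfl⟩
  · next h => simp only [Finset.notMem_empty, iff_false]
              rintro ⟨p, ⟨⟨h1, _⟩, h3⟩, rfl⟩
              exact h (h3 ▸ h1)

lemma scaledDU_singleton_prod (m k : ℕ) (v w : Finset (Fin m) → ℕ)
    (hv0 : v ∅ = 0) (hw0 : w ∅ = 0) (ℓ' ℓ : ℕ) (hℓ1 : 1 ≤ ℓ) (hℓk : ℓ ≤ k - 1)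
    (B : Finset (Fin m)) :
    scaledDU m k v w ℓ' ({(⟨ℓ - 1, by omega⟩ : Fin (k-1))} ×ˢ B)
      = (k + ℓ) * (if ℓ' ≤ ℓ then v B else w B) := by
  unfold scaledDU
  rw [Finset.sum_eq_single (⟨ℓ - 1, by omega⟩ : Fin (k-1))]
  · rw [copyPart_singleton_prod, if_pos rfl]
    have h1 : ((⟨ℓ - 1, by omega⟩ : Fin (k-1)) : ℕ) = ℓ - 1 := rfl
    rw [h1, show k + (ℓ - 1) + 1 = k + ℓ from by omega, Nat.sub_add_cancel hℓ1]
  · intro i _ hi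
    rw [copyPart_singleton_prod, if_neg hi]
    split <;> simp [hv0, hw0]
  · intro h; exact absurd (Finset.mem_univ _) h

lemma scaledDU_diff (m k : ℕ) (v w : Finset (Fin m) → ℕ) (ℓ : ℕ)
    (hℓ1 : 1 ≤ ℓ) (hℓk : ℓ ≤ k - 1) (S : Finset (Fin (k-1) × Fin m)) :
    (scaledDU m k v w ℓ S : ℤ) - scaledDU m k v w (ℓ+1) S
      = (k + ℓ) * ((v (copyPart m k S ⟨ℓ-1, by omega⟩) : ℤ)
          - w (copyPart m k S ⟨ℓ-1, by omega⟩)) := by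
  unfold scaledDU
  push_cast
  rw [← Finset.sum_sub_distrib]
  rw [Finset.sum_eq_single (⟨ℓ - 1, by omega⟩ : Fin (k-1))]
  · have h1 : ((⟨ℓ - 1, by omega⟩ : Fin (k-1)) : ℕ) = ℓ - 1 := rfl
    rw [h1]
    have hc : ((ℓ - 1 : ℕ) : ℤ) + 1 = (ℓ : ℤ) := by omega
    split_ifs with h h'
    · exact absurd h' (by omega)
    · linear_combination ((v (copyPart m k S ⟨ℓ - 1, by omega⟩) : ℤ)
        - (w (copyPart m k S ⟨ℓ - 1, by omega⟩) : ℤ)) * hc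
    · exact absurd (by omega : ℓ ≤ ℓ - 1 + 1) h
    · exact absurd (by omega : ℓ ≤ ℓ - 1 + 1) h
  · intro i _ hi
    have hne : (i : ℕ) ≠ ℓ - 1 := fun h => hi (Fin.ext h)
    split_ifs with h h'
    · ring
    · exact absurd (by omega : (i : ℕ) = ℓ - 1) hne
    · exact absurd (by omega : ℓ ≤ (i:ℕ) + 1) h
    · ring
  · intro h; exact absurd (Finset.mem_univ _) h

lemma min_sub_min_le (a b x : ℕ) :
    ((min a x : ℕ) : ℤ) - ((min b x : ℕ) : ℤ) ≤ max ((a : ℤ) - b) 0 := by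
  omega

/-- Any `α`-approximation to the SADP instance `VT(v,w)` yields an
`α`-approximation to the ODP instance `(v,w)`: if
`v''_ℓ(S) − v''_{ℓ+1}(S) ≥ α·max_T (v''_ℓ(T) − v''_{ℓ+1}(T))`, then
`v(S_ℓ) − w(S_ℓ) ≥ α·max_B (v(B) − w(B))`. -/
theorem VT_approx_yields_ODP_approx (m k : ℕ) (hk : 2 ≤ k)
    (v w : Finset (Fin m) → ℕ)
    (hv0 : v ∅ = 0) (hw0 : w ∅ = 0)
    (hvmono : ∀ A B : Finset (Fin m), A ⊆ B → v A ≤ v B)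
    (hwmono : ∀ A B : Finset (Fin m), A ⊆ B → w A ≤ w B)
    (hgap : ∃ A : Finset (Fin m), w A + 1 ≤ v A)
    (α : ℝ) (hα0 : 0 < α) (hα1 : α ≤ 1)
    (S : Finset (Fin (k - 1) × Fin m))
    (ℓ : ℕ) (hℓ1 : 1 ≤ ℓ) (hℓk : ℓ ≤ k - 1)
    (happrox : α *
        (((Finset.univ : Finset (Fin (k - 1) × Fin m)).powerset.sup'
            ⟨∅, Finset.empty_mem_powerset _⟩
            (fun T => (VTfun m k v w ℓ T : ℤ) - VTfun m k v w (ℓ + 1) T) : ℤ) : ℝ)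
      ≤ (VTfun m k v w ℓ S : ℝ) - (VTfun m k v w (ℓ + 1) S : ℝ)) :
    α * (((Finset.univ : Finset (Fin m)).powerset.sup'
          ⟨∅, Finset.empty_mem_powerset _⟩
          (fun B => (v B : ℤ) - w B) : ℤ) : ℝ)
      ≤ (v (copyPart m k S ⟨ℓ - 1, by omega⟩) : ℝ)
        - (w (copyPart m k S ⟨ℓ - 1, by omega⟩) : ℝ) := by
  classical
  obtain ⟨A, hA⟩ := hgap
  set Msup : ℤ := (Finset.univ : Finset (Fin m)).powerset.sup'
      ⟨∅, Finset.empty_mem_powerset _⟩ (fun B => (v B : ℤ) - w B) with hMdef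
  set Nsup : ℤ := (Finset.univ : Finset (Fin (k - 1) × Fin m)).powerset.sup'
      ⟨∅, Finset.empty_mem_powerset _⟩
      (fun T => (VTfun m k v w ℓ T : ℤ) - VTfun m k v w (ℓ + 1) T) with hNdef
  have hM1 : 1 ≤ Msup := by
    have h := Finset.le_sup' (fun B => (v B : ℤ) - w B)
      (Finset.mem_powerset.mpr (Finset.subset_univ A))
    rw [← hMdef] at h
    omega
  obtain ⟨B, hBmem, hBval⟩ := Finset.exists_mem_eq_sup'
    (⟨∅, Finset.empty_mem_powerset _⟩ :
      ((Finset.univ : Finset (Fin m)).powerset).Nonempty)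
    (fun B => (v B : ℤ) - w B)
  rw [← hMdef] at hBval
  have hwB : w B < v B := by omega
  have hvBu : v B ≤ v Finset.univ := hvmono _ _ (Finset.subset_univ B)
  have hwBu : w B ≤ v Finset.univ := le_trans hwB.le hvBu
  -- the witness T
  have hTℓ : VTfun m k v w ℓ ({(⟨ℓ - 1, by omega⟩ : Fin (k-1))} ×ˢ B)
      = (k + ℓ) * v B := by
    unfold VTfun
    rw [scaledDU_singleton_prod m k v w hv0 hw0 ℓ ℓ hℓ1 hℓk B, if_pos le_rfl]
    exact min_eq_left (Nat.mul_le_mul (by omega) hvBu)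
  have hTℓ1 : VTfun m k v w (ℓ+1) ({(⟨ℓ - 1, by omega⟩ : Fin (k-1))} ×ˢ B)
      = (k + ℓ) * w B := by
    unfold VTfun
    rw [scaledDU_singleton_prod m k v w hv0 hw0 (ℓ+1) ℓ hℓ1 hℓk B,
      if_neg (by omega)]
    exact min_eq_left (Nat.mul_le_mul (by omega) hwBu)
  have hNge : ((k : ℤ) + ℓ) * Msup ≤ Nsup := by
    have h := Finset.le_sup'
      (fun T => (VTfun m k v w ℓ T : ℤ) - VTfun m k v w (ℓ + 1) T)
      (Finset.mem_powerset.mpr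
        (Finset.subset_univ (({(⟨ℓ - 1, by omega⟩ : Fin (k-1))} ×ˢ B))))
    have h2 : (VTfun m k v w ℓ ({(⟨ℓ - 1, by omega⟩ : Fin (k-1))} ×ˢ B) : ℤ)
        - VTfun m k v w (ℓ + 1) ({(⟨ℓ - 1, by omega⟩ : Fin (k-1))} ×ˢ B) ≤ Nsup := h
    have hfT : (VTfun m k v w ℓ ({(⟨ℓ - 1, by omega⟩ : Fin (k-1))} ×ˢ B) : ℤ)
        - VTfun m k v w (ℓ + 1) ({(⟨ℓ - 1, by omega⟩ : Fin (k-1))} ×ˢ B)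
        = ((k : ℤ) + ℓ) * Msup := by
      rw [hTℓ, hTℓ1, hBval]
      push_cast
      ring
    exact le_of_eq_of_le hfT.symm h2
  -- the bound on S
  have hdiff := scaledDU_diff m k v w ℓ hℓ1 hℓk S
  have hSle : (VTfun m k v w ℓ S : ℤ) - VTfun m k v w (ℓ+1) S
      ≤ max (((k : ℤ) + ℓ) * ((v (copyPart m k S ⟨ℓ-1, by omega⟩) : ℤ)
          - w (copyPart m k S ⟨ℓ-1, by omega⟩))) 0 := by
    have h := min_sub_min_le (scaledDU m k v w ℓ S) (scaledDU m k v w (ℓ+1) S)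
      (2 * k * v (Finset.univ : Finset (Fin m)))
    rw [hdiff] at h
    exact h
  -- assemble over ℝ
  have hc : (0 : ℝ) < (k : ℝ) + ℓ := by
    have : (0 : ℕ) < k + ℓ := by omega
    exact_mod_cast this
  have h2 : α * ((((k : ℤ) + ℓ) * Msup : ℤ) : ℝ) ≤ α * ((Nsup : ℤ) : ℝ) :=
    mul_le_mul_of_nonneg_left (by exact_mod_cast hNge) hα0.le
  rcases le_or_gt ((v (copyPart m k S ⟨ℓ-1, by omega⟩) : ℤ)
      - w (copyPart m k S ⟨ℓ-1, by omega⟩)) 0 with hdz | hdz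
  · exfalso
    have hmle : ((k : ℤ) + ℓ) * ((v (copyPart m k S ⟨ℓ-1, by omega⟩) : ℤ)
        - w (copyPart m k S ⟨ℓ-1, by omega⟩)) ≤ 0 :=
      mul_nonpos_of_nonneg_of_nonpos (by omega) hdz
    have hSle0 : (VTfun m k v w ℓ S : ℤ) - VTfun m k v w (ℓ+1) S ≤ 0 :=
      hSle.trans (max_le hmle le_rfl)
    have hpos : (0 : ℤ) < ((k : ℤ) + ℓ) * Msup :=
      mul_pos (by omega) (by omega)
    have h1 : (0 : ℝ) < α * ((((k : ℤ) + ℓ) * Msup : ℤ) : ℝ) :=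
      mul_pos hα0 (by exact_mod_cast hpos)
    have h3 : (VTfun m k v w ℓ S : ℝ) - (VTfun m k v w (ℓ + 1) S : ℝ) ≤ 0 := by
      exact_mod_cast hSle0
    linarith [happrox]
  · have hmle : max (((k : ℤ) + ℓ) * ((v (copyPart m k S ⟨ℓ-1, by omega⟩) : ℤ)
        - w (copyPart m k S ⟨ℓ-1, by omega⟩))) 0
        ≤ ((k : ℤ) + ℓ) * ((v (copyPart m k S ⟨ℓ-1, by omega⟩) : ℤ)
        - w (copyPart m k S ⟨ℓ-1, by omega⟩)) :=
      max_le le_rfl (mul_pos (by omega) hdz).le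
    have hSle2 : (VTfun m k v w ℓ S : ℤ) - VTfun m k v w (ℓ+1) S
        ≤ ((k : ℤ) + ℓ) * ((v (copyPart m k S ⟨ℓ-1, by omega⟩) : ℤ)
        - w (copyPart m k S ⟨ℓ-1, by omega⟩)) := hSle.trans hmle
    have h4 : (VTfun m k v w ℓ S : ℝ) - (VTfun m k v w (ℓ + 1) S : ℝ)
        ≤ ((((k : ℤ) + ℓ) * ((v (copyPart m k S ⟨ℓ-1, by omega⟩) : ℤ)
        - w (copyPart m k S ⟨ℓ-1, by omega⟩)) : ℤ) : ℝ) := by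
      exact_mod_cast hSle2
    have hbig : α * ((((k : ℤ) + ℓ) * Msup : ℤ) : ℝ)
        ≤ ((((k : ℤ) + ℓ) * ((v (copyPart m k S ⟨ℓ-1, by omega⟩) : ℤ)
        - w (copyPart m k S ⟨ℓ-1, by omega⟩)) : ℤ) : ℝ) :=
      le_trans h2 (le_trans happrox h4)
    push_cast at hbig
    have h3 : ((k : ℝ) + ℓ) * (α * ((Msup : ℤ) : ℝ))
        ≤ ((k : ℝ) + ℓ) * ((v (copyPart m k S ⟨ℓ-1, by omega⟩) : ℝ)
        - (w (copyPart m k S ⟨ℓ-1, by omega⟩) : ℝ)) := by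
      push_cast
      nlinarith [hbig]
    have hfinal := le_of_mul_le_mul_left h3 hc
    push_cast at hfinal ⊢
    linarith [hfinal]
end
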